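/- arXiv:1107.2220 — 2 statements merged into one kernel-verified Lean document; each statement's English description precedes it below -/
import Mathlib

section
/- Let V be a finite-dimensional real normed vector space and let C ⊆ V be a nonempty open cone, i.e. a nonempty open subset such that t·v ∈ C whenever v ∈ C and t ≥ 1. Let p : V → ℂ be a polynomial function, and suppose there are a constant c > 0 and a natural number k such that |p(T)| ≤ c·(1 + ‖T‖)^k for all T ∈ C. Then the total degree of p is at most k. -/
open Polynomial Filter in
theorem aux_natDegree_le_of_ray_bound (Q : Polynomial ℂ) (M : ℝ) (k : ℕ)
    (h : ∀ t : ℝ, 1 ≤ t → ‖Q.eval (t : ℂ)‖ ≤ M * t ^ k) : Q.natDegree ≤ k := by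
  by_contra hk
  push_neg at hk
  have hQ : Q ≠ 0 := by
    rintro rfl
    simp at hk
  set D := Q.natDegree with hD
  set f : ℝ → ℂ := fun t => Q.eval (t : ℂ) / (t : ℂ) ^ D with hf
  have h1 : Tendsto f atTop (nhds (Q.coeff D)) := by
    have heq : ∀ t : ℝ, 1 ≤ t →
        f t = Q.coeff D + ∑ i ∈ Finset.range D, Q.coeff i * (t : ℂ) ^ i / (t : ℂ) ^ D := by
      intro t ht
      have ht0 : (t : ℂ) ≠ 0 := by
        simp only [ne_eq, Complex.ofReal_eq_zero]
        linarith
      have : Q.eval (t : ℂ) = ∑ i ∈ Finset.range (D + 1), Q.coeff i * (t : ℂ) ^ i := by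
        rw [eval_eq_sum_range]
      rw [hf]
      simp only [this, Finset.sum_range_succ, add_div]
      rw [Finset.sum_div]
      rw [add_comm]
      congr 1
      field_simp
    have h2 : Tendsto (fun t : ℝ => Q.coeff D +
        ∑ i ∈ Finset.range D, Q.coeff i * (t : ℂ) ^ i / (t : ℂ) ^ D) atTop
        (nhds (Q.coeff D + 0)) := by
      apply Tendsto.add tendsto_const_nhds
      have : Tendsto (fun t : ℝ =>
          ∑ i ∈ Finset.range D, Q.coeff i * (t : ℂ) ^ i / (t : ℂ) ^ D) atTop
          (nhds (∑ i ∈ Finset.range D, 0)) := by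
        apply tendsto_finset_sum
        intro i hi
        rw [Finset.mem_range] at hi
        apply squeeze_zero_norm' (a := fun t : ℝ => ‖Q.coeff i‖ * t⁻¹) ?_ ?_
        · filter_upwards [eventually_ge_atTop (1 : ℝ)] with t ht
          have ht0 : (0 : ℝ) < t := by linarith
          rw [norm_div, norm_mul, norm_pow, norm_pow, Complex.norm_real,
            Real.norm_of_nonneg ht0.le, mul_div_assoc]
          gcongr
          rw [div_le_iff₀ (by positivity), inv_mul_eq_div]
          rw [le_div_iff₀ ht0, ← pow_succ]
          exact pow_le_pow_right₀ ht (by omega)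
        · rw [show (0:ℝ) = ‖Q.coeff i‖ * 0 by ring]
          exact tendsto_inv_atTop_zero.const_mul _
      simpa using this
    rw [add_zero] at h2
    exact Tendsto.congr' (by filter_upwards [eventually_ge_atTop (1:ℝ)] with t ht
      using (heq t ht).symm) h2
  have h0 : Tendsto f atTop (nhds 0) := by
    have hM : (0:ℝ) ≤ M := by
      have := h 1 le_rfl
      simp only [Complex.ofReal_one, one_pow, mul_one] at this
      exact (norm_nonneg _).trans this
    apply squeeze_zero_norm' (a := fun t : ℝ => M * t⁻¹) ?_ ?_
    · filter_upwards [eventually_ge_atTop (1 : ℝ)] with t ht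
      have ht0 : (0 : ℝ) < t := by linarith
      rw [hf]
      rw [norm_div, norm_pow, Complex.norm_real, Real.norm_of_nonneg ht0.le]
      rw [div_le_iff₀ (by positivity), mul_assoc]
      refine (h t ht).trans ?_
      gcongr
      rw [inv_mul_eq_div]
      rw [le_div_iff₀ ht0, ← pow_succ]
      exact pow_le_pow_right₀ ht (by omega)
    · rw [show (0:ℝ) = M * 0 by ring]
      exact tendsto_inv_atTop_zero.const_mul _
  have : Q.coeff D = 0 := tendsto_nhds_unique h1 h0
  exact hQ (leadingCoeff_eq_zero.mp this)

open MvPolynomial in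
theorem aux_eval_smul_homogeneous {n d : ℕ} (φ : MvPolynomial (Fin n) ℂ)
    (hφ : φ.IsHomogeneous d) (s : ℂ) (x : Fin n → ℂ) :
    MvPolynomial.eval (fun i => s * x i) φ = s ^ d * MvPolynomial.eval x φ := by
  rw [eval_eq', eval_eq', Finset.mul_sum]
  apply Finset.sum_congr rfl
  intro m hm
  have hdeg : ∑ i, m i = d := by
    have h1 : m.degree = d := by
      rw [Finsupp.degree_eq_weight_one]
      exact hφ (MvPolynomial.mem_support_iff.mp hm)
    rw [← h1, Finsupp.degree]
    exact (Finset.sum_subset (Finset.subset_univ _) (by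
      intro i _ hi
      simpa using Finsupp.notMem_support_iff.mp hi)).symm
  calc MvPolynomial.coeff m φ * ∏ i, (s * x i) ^ m i
      = MvPolynomial.coeff m φ * ((∏ i, s ^ m i) * ∏ i, x i ^ m i) := by
        rw [← Finset.prod_mul_distrib]; simp_rw [mul_pow]
    _ = s ^ d * (MvPolynomial.coeff m φ * ∏ i, x i ^ m i) := by
        rw [Finset.prod_pow_eq_pow_sum, hdeg]; ring

open MvPolynomial in
theorem aux_analyticOnNhd_eval {n : ℕ} (h : MvPolynomial (Fin n) ℂ) :
    AnalyticOnNhd ℝ (fun x : Fin n → ℝ => MvPolynomial.eval (fun i => ((x i : ℝ) : ℂ)) h)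
      Set.univ := by
  induction h using MvPolynomial.induction_on with
  | C a => simpa using (analyticOnNhd_const : AnalyticOnNhd ℝ (fun _ : Fin n → ℝ => a) Set.univ)
  | add p q hp hq => simpa [MvPolynomial.eval_add, Pi.add_def] using hp.add hq
  | mul_X p i hp =>
      simp only [MvPolynomial.eval_mul, MvPolynomial.eval_X]
      apply hp.mul
      have : (fun x : Fin n → ℝ => ((x i : ℝ) : ℂ)) =
          (Complex.ofRealCLM.comp (ContinuousLinearMap.proj i : (Fin n → ℝ) →L[ℝ] ℝ)) := rfl
      rw [this]
      exact fun x _ => ContinuousLinearMap.analyticAt _ x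

open MvPolynomial in
theorem aux_eq_zero_of_eval_real_zero {n : ℕ} (h : MvPolynomial (Fin n) ℂ)
    (H : ∀ x : Fin n → ℝ, MvPolynomial.eval (fun i => ((x i : ℝ) : ℂ)) h = 0) : h = 0 := by
  classical
  set A : MvPolynomial (Fin n) ℝ :=
    ∑ m ∈ h.support, monomial m ((h.coeff m).re) with hA
  set B : MvPolynomial (Fin n) ℝ :=
    ∑ m ∈ h.support, monomial m ((h.coeff m).im) with hB
  have hcoeffA : ∀ m, A.coeff m = (h.coeff m).re := by
    intro m
    rw [hA, MvPolynomial.coeff_sum]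
    simp_rw [coeff_monomial]
    rw [Finset.sum_ite_eq' h.support m (fun m => (h.coeff m).re)]
    by_cases hm : m ∈ h.support
    · rw [if_pos hm]
    · rw [if_neg hm]
      rw [MvPolynomial.notMem_support_iff] at hm
      rw [hm]
      simp
  have hcoeffB : ∀ m, B.coeff m = (h.coeff m).im := by
    intro m
    rw [hB, MvPolynomial.coeff_sum]
    simp_rw [coeff_monomial]
    rw [Finset.sum_ite_eq' h.support m (fun m => (h.coeff m).im)]
    by_cases hm : m ∈ h.support
    · rw [if_pos hm]
    · rw [if_neg hm]
      rw [MvPolynomial.notMem_support_iff] at hm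
      rw [hm]
      simp
  have key : ∀ x : Fin n → ℝ, MvPolynomial.eval (fun i => ((x i : ℝ) : ℂ)) h =
      ((MvPolynomial.eval x A : ℝ) : ℂ) + Complex.I * ((MvPolynomial.eval x B : ℝ) : ℂ) := by
    intro x
    have hsupA : A.support ⊆ h.support := by
      intro m hm
      rw [MvPolynomial.mem_support_iff] at hm ⊢
      intro hc
      exact hm (by rw [hcoeffA, hc]; simp)
    have hsupB : B.support ⊆ h.support := by
      intro m hm
      rw [MvPolynomial.mem_support_iff] at hm ⊢
      intro hc
      exact hm (by rw [hcoeffB, hc]; simp)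
    rw [MvPolynomial.eval_eq', MvPolynomial.eval_eq', MvPolynomial.eval_eq']
    push_cast
    have eA : ∑ m ∈ A.support, ((A.coeff m : ℝ) : ℂ) * ∏ i, ((x i : ℝ) : ℂ) ^ m i =
        ∑ m ∈ h.support, (((h.coeff m).re : ℝ) : ℂ) * ∏ i, ((x i : ℝ) : ℂ) ^ m i := by
      rw [Finset.sum_subset hsupA (by
        intro m _ hm
        rw [MvPolynomial.notMem_support_iff] at hm
        rw [hm]
        simp)]
      exact Finset.sum_congr rfl fun m _ => by rw [hcoeffA]
    have eB : ∑ m ∈ B.support, ((B.coeff m : ℝ) : ℂ) * ∏ i, ((x i : ℝ) : ℂ) ^ m i =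
        ∑ m ∈ h.support, (((h.coeff m).im : ℝ) : ℂ) * ∏ i, ((x i : ℝ) : ℂ) ^ m i := by
      rw [Finset.sum_subset hsupB (by
        intro m _ hm
        rw [MvPolynomial.notMem_support_iff] at hm
        rw [hm]
        simp)]
      exact Finset.sum_congr rfl fun m _ => by rw [hcoeffB]
    rw [eA, eB, Finset.mul_sum, ← Finset.sum_add_distrib]
    apply Finset.sum_congr rfl
    intro m _
    rw [show ∀ (a b P : ℂ), a * P + Complex.I * (b * P) = (a + Complex.I * b) * P by
      intros; ring]
    congr 1
    rw [mul_comm Complex.I]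
    exact (Complex.re_add_im _).symm
  have hAzero : A = 0 := by
    apply MvPolynomial.funext
    intro x
    have := H x
    rw [key x] at this
    have : ((MvPolynomial.eval x A : ℝ) : ℂ).re +
        (Complex.I * ((MvPolynomial.eval x B : ℝ) : ℂ)).re = 0 := by
      rw [← Complex.add_re, this]; rfl
    simpa using this
  have hBzero : B = 0 := by
    apply MvPolynomial.funext
    intro x
    have := H x
    rw [key x] at this
    have : ((MvPolynomial.eval x A : ℝ) : ℂ).im +
        (Complex.I * ((MvPolynomial.eval x B : ℝ) : ℂ)).im = 0 := by
      rw [← Complex.add_im, this]; rfl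
    simpa using this
  ext m
  have h1 : (h.coeff m).re = 0 := by rw [← hcoeffA, hAzero]; simp
  have h2 : (h.coeff m).im = 0 := by rw [← hcoeffB, hBzero]; simp
  simp [Complex.ext_iff, h1, h2]



/-- If a polynomial function on a finite-dimensional real normed space, given in linear
coordinates by the multivariate polynomial `q`, satisfies the bound
`‖p T‖ ≤ c * (1 + ‖T‖) ^ k` on a nonempty open cone, then its total degree is at most `k`. -/
theorem totalDegree_le_of_polynomial_bound_on_cone
    (V : Type*) [NormedAddCommGroup V] [NormedSpace ℝ V] [FiniteDimensional ℝ V]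
    (C : Set V) (hCne : C.Nonempty) (hCopen : IsOpen C)
    (hCcone : ∀ v ∈ C, ∀ t : ℝ, 1 ≤ t → t • v ∈ C)
    (n : ℕ) (e : V ≃ₗ[ℝ] (Fin n → ℝ)) (q : MvPolynomial (Fin n) ℂ)
    (p : V → ℂ) (hpq : ∀ v : V, p v = MvPolynomial.eval (fun i => ((e v i : ℝ) : ℂ)) q)
    (c : ℝ) (hc : 0 < c) (k : ℕ)
    (hbound : ∀ T ∈ C, ‖p T‖ ≤ c * (1 + ‖T‖) ^ k) :
    q.totalDegree ≤ k := by
  classical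
  by_contra hk
  push_neg at hk
  have hq0 : q ≠ 0 := by
    rintro rfl
    rw [MvPolynomial.totalDegree_zero] at hk
    exact Nat.not_lt_zero _ hk
  set D := q.totalDegree with hD
  set φ := MvPolynomial.homogeneousComponent D q with hφdef
  have hφhom : φ.IsHomogeneous D := MvPolynomial.homogeneousComponent_isHomogeneous D q
  -- Step A: φ evaluates to zero at coordinates of points of C
  have stepA : ∀ v ∈ C, MvPolynomial.eval (fun i => ((e v i : ℝ) : ℂ)) φ = 0 := by
    intro v hv
    set cf : Fin n → ℂ := fun i => ((e v i : ℝ) : ℂ) with hcf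
    set R : Polynomial ℂ := ∑ j ∈ Finset.range (D + 1),
      Polynomial.C (MvPolynomial.eval cf (MvPolynomial.homogeneousComponent j q)) *
        Polynomial.X ^ j with hR
    have hReval : ∀ t : ℝ, R.eval (t : ℂ) = p (t • v) := by
      intro t
      rw [hpq]
      have hcoord : (fun i => ((e (t • v) i : ℝ) : ℂ)) = fun i => (t : ℂ) * cf i := by
        funext i
        rw [map_smul, Pi.smul_apply, smul_eq_mul]
        push_cast
        rfl
      rw [hcoord]
      conv_rhs => rw [← MvPolynomial.sum_homogeneousComponent q]
      rw [map_sum]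
      rw [hR, Polynomial.eval_finset_sum]
      apply Finset.sum_congr rfl
      intro j _
      rw [Polynomial.eval_mul, Polynomial.eval_C, Polynomial.eval_pow, Polynomial.eval_X]
      rw [aux_eval_smul_homogeneous _ (MvPolynomial.homogeneousComponent_isHomogeneous j q)]
      ring
    have hRbound : ∀ t : ℝ, 1 ≤ t → ‖R.eval (t : ℂ)‖ ≤ (c * (1 + ‖v‖) ^ k) * t ^ k := by
      intro t ht
      have ht0 : (0:ℝ) < t := by linarith
      rw [hReval t]
      refine (hbound _ (hCcone v hv t ht)).trans ?_
      rw [norm_smul, Real.norm_of_nonneg ht0.le, mul_assoc, ← mul_pow]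
      gcongr
      calc 1 + t * ‖v‖ ≤ t + t * ‖v‖ := by linarith
        _ = (1 + ‖v‖) * t := by ring
    have hdeg : R.natDegree ≤ k :=
      aux_natDegree_le_of_ray_bound R _ k hRbound
    have hcoeffD : R.coeff D = MvPolynomial.eval cf φ := by
      rw [hR, Polynomial.finset_sum_coeff]
      simp_rw [Polynomial.coeff_C_mul, Polynomial.coeff_X_pow]
      rw [Finset.sum_congr rfl (fun j _ => by
        rw [mul_ite, mul_one, mul_zero])]
      rw [Finset.sum_ite_eq (Finset.range (D + 1)) D]
      rw [if_pos (Finset.self_mem_range_succ D)]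
    have : R.coeff D = 0 := Polynomial.coeff_eq_zero_of_natDegree_lt (lt_of_le_of_lt hdeg hk)
    rw [hcoeffD] at this
    exact this
  -- Step B: φ evaluates to zero at all real points, by analytic continuation
  have stepB : ∀ x : Fin n → ℝ, MvPolynomial.eval (fun i => ((x i : ℝ) : ℂ)) φ = 0 := by
    set g : (Fin n → ℝ) → ℂ := fun x => MvPolynomial.eval (fun i => ((x i : ℝ) : ℂ)) φ with hg
    obtain ⟨v₀, hv₀⟩ := hCne
    have hopen : IsOpen ((e : V ≃ₗ[ℝ] (Fin n → ℝ)).toContinuousLinearEquiv '' C) :=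
      e.toContinuousLinearEquiv.toHomeomorph.isOpenMap C hCopen
    have hmem : (e.toContinuousLinearEquiv v₀ : Fin n → ℝ) ∈
        e.toContinuousLinearEquiv '' C := ⟨v₀, hv₀, rfl⟩
    have hzero : ∀ x ∈ (e.toContinuousLinearEquiv '' C), g x = 0 := by
      rintro x ⟨v, hv, rfl⟩
      exact stepA v hv
    have hev : g =ᶠ[nhds (e.toContinuousLinearEquiv v₀)] 0 := by
      filter_upwards [hopen.mem_nhds hmem] with x hx using hzero x hx
    have := (aux_analyticOnNhd_eval φ).eqOn_zero_of_preconnected_of_eventuallyEq_zero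
      isPreconnected_univ (Set.mem_univ _) hev
    intro x
    exact this (Set.mem_univ x)
  -- Step C: φ = 0
  have hφ0 : φ = 0 := aux_eq_zero_of_eval_real_zero φ stepB
  -- Step D: contradiction
  obtain ⟨m, hm, hmsum⟩ := Finset.exists_mem_eq_sup q.support
    (MvPolynomial.support_nonempty.mpr hq0) (fun s => s.sum fun _ e => e)
  have hmdeg : m.degree = D := by
    rw [hD, MvPolynomial.totalDegree, hmsum]
    rfl
  have : MvPolynomial.coeff m φ = MvPolynomial.coeff m q := by
    rw [hφdef, MvPolynomial.coeff_homogeneousComponent, if_pos hmdeg]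
  rw [hφ0] at this
  simp only [MvPolynomial.coeff_zero] at this
  exact (MvPolynomial.mem_support_iff.mp hm) this.symm
end

section
/- Let V be a finite-dimensional real inner product space, let a₁, …, a_n be a basis of V such that ⟨a_i, a_j⟩ ≤ 0 for all i ≠ j, let w₁, …, w_n be the dual basis characterized by ⟨w_i, a_j⟩ = δ_{ij}, and let ρ ∈ V. Then the set { λ ∈ V : ⟨λ, a_i⟩ > 0 for all i, and ⟨λ − ρ, w_i⟩ ≤ 0 for all i } is bounded. -/
open RealInnerProductSpace

/-- Let `a₁, …, aₙ` be a basis of a finite-dimensional real inner product space with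
`⟪aᵢ, aⱼ⟫ ≤ 0` for `i ≠ j`, let `w₁, …, wₙ` be the dual basis (`⟪wᵢ, aⱼ⟫ = δᵢⱼ`), and let
`ρ ∈ V`. Then the set of `λ` with `⟪λ, aᵢ⟫ > 0` and `⟪λ − ρ, wᵢ⟫ ≤ 0` for all `i` is bounded. -/
theorem langlands_region_bounded
    (V : Type*) [NormedAddCommGroup V] [InnerProductSpace ℝ V] [FiniteDimensional ℝ V]
    (n : ℕ) (a : Module.Basis (Fin n) ℝ V)
    (ha : ∀ i j : Fin n, i ≠ j → ⟪a i, a j⟫ ≤ 0)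
    (w : Fin n → V)
    (hw : ∀ i j : Fin n, ⟪w i, a j⟫ = if i = j then (1 : ℝ) else 0)
    (ρ : V) :
    Bornology.IsBounded
      {lam : V | (∀ i : Fin n, 0 < ⟪lam, a i⟫) ∧ (∀ i : Fin n, ⟪lam - ρ, w i⟫ ≤ 0)} := by
  refine (Metric.isBounded_closedBall (x := (0 : V)) (r := ‖ρ‖)).subset ?_
  rintro lam ⟨h1, h2⟩
  simp only [Metric.mem_closedBall, dist_zero_right]
  -- `lam = ∑ i, ⟪lam, a i⟫ • w i`
  have hrep : lam = ∑ i, ⟪lam, a i⟫ • w i := by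
    refine InnerProductSpace.ext_inner_right_basis a fun j => ?_
    rw [sum_inner]
    simp only [real_inner_smul_left, hw]
    simp
  have hsum : ∀ x : V, ⟪lam, x⟫ = ∑ i, ⟪lam, a i⟫ * ⟪w i, x⟫ := by
    intro x
    conv_lhs => rw [hrep]
    rw [sum_inner]
    simp [real_inner_smul_left]
  -- key inequality : ‖lam‖² ≤ ⟪lam, ρ⟫
  have key : ‖lam‖ ^ 2 ≤ ⟪lam, ρ⟫ := by
    have h3 : ∀ i, ⟪w i, lam⟫ ≤ ⟪w i, ρ⟫ := by
      intro i
      have := h2 i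
      rw [inner_sub_left] at this
      linarith [real_inner_comm (w i) lam, real_inner_comm (w i) ρ]
    calc ‖lam‖ ^ 2 = ⟪lam, lam⟫ := (real_inner_self_eq_norm_sq lam).symm
      _ = ∑ i, ⟪lam, a i⟫ * ⟪w i, lam⟫ := hsum lam
      _ ≤ ∑ i, ⟪lam, a i⟫ * ⟪w i, ρ⟫ := by
          refine Finset.sum_le_sum fun i _ => ?_
          have hi := (h1 i).le
          have := h3 i
          nlinarith
      _ = ⟪lam, ρ⟫ := (hsum ρ).symm
  have habs : ⟪lam, ρ⟫ ≤ ‖lam‖ * ‖ρ‖ := real_inner_le_norm lam ρ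
  nlinarith [norm_nonneg lam, norm_nonneg ρ, sq_nonneg (‖lam‖ - ‖ρ‖)]
end
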